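/- Let F be a field of characteristic zero and let h, j : ℕ → F be sequences with h 0 = 1 and j 1 = 1 satisfying equation (D1): n·h_n = Σ_{r=1}^{n} j_r · h_{n-r} for all n ≥ 1. For n ≥ 1 let H_n(h̄) be the n×n matrix over F whose entry in row i and column k (1 ≤ i,k ≤ n) equals i·h_i if k = 1, equals h_{i-k+1} if 2 ≤ k ≤ i, equals 1 if k = i+1, and equals 0 if k > i+1. Then for all n ≥ 1: det(H_n(h̄)) = 0 if and only if j_n = 0; equivalently, 0 is an eigenvalue of H_n(h̄) if and only if j_n = 0. -/

import Mathlib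

/-- The matrix `H_n(h̄)`: first column `(h 1, 2 • h 2, …, n • h n)ᵀ`, entries `h (i - k + 1)`
in (1-based) row `i`, column `k` for `2 ≤ k ≤ i`, superdiagonal entries `1`, and `0` above
the superdiagonal. -/
def Hmat {F : Type*} [Field F] (h : ℕ → F) (n : ℕ) : Matrix (Fin n) (Fin n) F :=
  Matrix.of fun i k =>
    if (k : ℕ) = 0 then ((i : ℕ) + 1) • h ((i : ℕ) + 1)
    else if (k : ℕ) ≤ (i : ℕ) then h ((i : ℕ) - (k : ℕ) + 1)
    else if (k : ℕ) = (i : ℕ) + 1 then 1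
    else 0

theorem hw_aux {F : Type*} [Field F] (h j : ℕ → F)
    (h0 : h 0 = 1)
    (hD : ∀ n : ℕ, 1 ≤ n → n • h n = ∑ r ∈ Finset.Icc 1 n, j r * h (n - r))
    (m K : ℕ) (hK : K ≤ m) :
    (((K : ℕ) + 1) • h (K + 1)
      + ∑ i ∈ Finset.Icc 1 m,
          (-(j i)) * (if i ≤ K then h (K - i + 1) else if i = K + 1 then 1 else 0))
      = if K = m then j (m + 1) else 0 := by
  have hgi : ∀ i ∈ Finset.Icc 1 m,
      (-(j i)) * (if i ≤ K then h (K - i + 1) else if i = K + 1 then 1 else 0)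
        = if i ≤ K + 1 then -(j i * h (K + 1 - i)) else 0 := by
    intro i hi
    simp only [Finset.mem_Icc] at hi
    by_cases h2 : i ≤ K
    · rw [if_pos h2, if_pos (by omega)]
      have : K - i + 1 = K + 1 - i := by omega
      rw [this]; ring
    · by_cases h3 : i = K + 1
      · rw [if_neg h2, if_pos h3, if_pos (by omega), h3]
        simp [h0]
      · rw [if_neg h2, if_neg h3, if_neg (by omega)]
        ring
  rw [Finset.sum_congr rfl hgi]
  by_cases hKm : K = m
  · subst hKm
    rw [if_pos rfl]
    have hif : ∀ i ∈ Finset.Icc 1 K,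
        (if i ≤ K + 1 then -(j i * h (K + 1 - i)) else 0) = -(j i * h (K + 1 - i)) := by
      intro i hi; simp only [Finset.mem_Icc] at hi; rw [if_pos (by omega)]
    rw [Finset.sum_congr rfl hif]
    have hIcc : Finset.Icc 1 (K + 1) = insert (K + 1) (Finset.Icc 1 K) :=
      (Finset.insert_Icc_right_eq_Icc_add_one (by omega)).symm
    have hDK := hD (K + 1) (by omega)
    rw [hIcc, Finset.sum_insert (by simp), nsmul_eq_mul] at hDK
    have hs : (∑ i ∈ Finset.Icc 1 K, j i * h (K + 1 - i))
        = ((K : ℕ) + 1 : F) * h (K + 1) - j (K + 1) := by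
      have : (K + 1) - (K + 1) = 0 := by omega
      rw [this, h0, mul_one] at hDK
      push_cast at hDK
      linear_combination -hDK
    rw [Finset.sum_neg_distrib, hs, nsmul_eq_mul]
    push_cast
    ring
  · rw [if_neg hKm]
    have hKlt : K + 1 ≤ m := by omega
    have hfil : (∑ i ∈ Finset.Icc 1 m, if i ≤ K + 1 then -(j i * h (K + 1 - i)) else 0)
        = ∑ i ∈ Finset.Icc 1 (K + 1), -(j i * h (K + 1 - i)) := by
      rw [← Finset.sum_filter]
      apply Finset.sum_congr _ fun _ _ => rfl
      ext x
      simp only [Finset.mem_filter, Finset.mem_Icc]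
      omega
    rw [hfil, Finset.sum_neg_distrib, ← hD (K + 1) (by omega)]
    simp

theorem det_Hmat_key {F : Type*} [Field F] (h j : ℕ → F)
    (h0 : h 0 = 1)
    (hD : ∀ n : ℕ, 1 ≤ n → n • h n = ∑ r ∈ Finset.Icc 1 n, j r * h (n - r)) :
    ∀ m : ℕ, (Hmat h (m + 1)).det = (-1 : F) ^ m * j (m + 1) := by
  intro m
  set A := Hmat h (m + 1) with hA
  set c : Fin (m + 1) → F := fun s => if (s : ℕ) = 0 then 1 else -(j (s : ℕ)) with hc
  set w : Fin (m + 1) → F := fun k => if (k : ℕ) = m then j (m + 1) else 0 with hwdef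
  have hw : ∀ k : Fin (m + 1), (∑ i : Fin (m + 1), c i • A k i) = w k := by
    intro k
    have hK : (k : ℕ) ≤ m := Nat.lt_succ_iff.mp k.isLt
    have hterm : ∀ i : Fin (m + 1), c i • A k i =
        (fun i : ℕ => (if i = 0 then ((k : ℕ) + 1) • h ((k : ℕ) + 1)
          else (-(j i)) * (if i ≤ (k : ℕ) then h ((k : ℕ) - i + 1)
            else if i = (k : ℕ) + 1 then 1 else 0))) (i : ℕ) := by
      intro i
      by_cases hi : (i : ℕ) = 0 <;>
        (simp only [Fin.val_eq_zero_iff] at hi; simp [hc, hA, Hmat, hi, smul_eq_mul])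
    have hsum1 : (∑ i : Fin (m + 1), c i • A k i)
        = ∑ i ∈ Finset.range (m + 1),
            (if i = 0 then ((k : ℕ) + 1) • h ((k : ℕ) + 1)
              else (-(j i)) * (if i ≤ (k : ℕ) then h ((k : ℕ) - i + 1)
                else if i = (k : ℕ) + 1 then 1 else 0)) := by
      rw [Finset.sum_congr rfl fun i _ => hterm i]
      exact Fin.sum_univ_eq_sum_range
        (fun i : ℕ => if i = 0 then ((k : ℕ) + 1) • h ((k : ℕ) + 1)
          else (-(j i)) * (if i ≤ (k : ℕ) then h ((k : ℕ) - i + 1)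
            else if i = (k : ℕ) + 1 then 1 else 0)) (m + 1)
    have hrange : Finset.range (m + 1) = insert 0 (Finset.Icc 1 m) := by
      ext x; simp [Nat.lt_succ_iff]; omega
    rw [hsum1, hrange, Finset.sum_insert (by simp), if_pos rfl,
      Finset.sum_congr rfl (fun i hi => by
        have : i ≠ 0 := by simp only [Finset.mem_Icc] at hi; omega
        rw [if_neg this])]
    rw [hw_aux h j h0 hD m (k : ℕ) hK]
  have hup : (A.updateCol 0 w).det = A.det := by
    have hds := Matrix.det_updateCol_sum A 0 c
    have hc0 : c 0 = 1 := by simp [hc]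
    rw [hc0, one_smul] at hds
    rw [← hds, show (fun k => ∑ i : Fin (m + 1), c i • A k i) = w from funext hw]
  rw [← hup, Matrix.det_succ_column_zero]
  have hBw : ∀ i : Fin (m + 1), (A.updateCol 0 w) i 0 = w i := fun i =>
    Matrix.updateCol_self
  rw [Finset.sum_eq_single (Fin.last m)]
  · rw [hBw]
    have hwlast : w (Fin.last m) = j (m + 1) := by simp [hwdef]
    have hsub : ((A.updateCol 0 w).submatrix (Fin.last m).succAbove Fin.succ).det = 1 := by
      set S := (A.updateCol 0 w).submatrix (Fin.last m).succAbove Fin.succ with hS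
      have hSentry : ∀ a b : Fin m, S a b =
          (if (b : ℕ) + 1 ≤ (a : ℕ) then h ((a : ℕ) - ((b : ℕ) + 1) + 1)
            else if (b : ℕ) + 1 = (a : ℕ) + 1 then 1 else 0) := by
        intro a b
        have hsa : (Fin.last m).succAbove a = a.castSucc := by
          rw [Fin.succAbove_last]
        rw [hS, Matrix.submatrix_apply, hsa,
          Matrix.updateCol_ne (Fin.succ_ne_zero b)]
        simp only [hA, Hmat, Matrix.of_apply, Fin.coe_castSucc, Fin.val_succ]
        rw [if_neg (by omega)]
      have htri : Matrix.BlockTriangular S OrderDual.toDual := by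
        intro a b hab
        have hab' : (a : ℕ) < (b : ℕ) := hab
        rw [hSentry, if_neg (by omega), if_neg (by omega)]
      rw [Matrix.det_of_lowerTriangular S htri]
      apply Finset.prod_eq_one
      intro a _
      rw [hSentry, if_neg (by omega), if_pos rfl]
    rw [hsub, hwlast, Fin.val_last, mul_one]
  · intro i _ hi
    have : (i : ℕ) ≠ m := fun hc' => hi (Fin.ext hc')
    rw [hBw, hwdef]
    simp only [this, if_false, mul_zero, zero_mul]
  · intro habs
    exact absurd (Finset.mem_univ _) habs

/-- Over a field of characteristic zero, if `h 0 = 1`, `j 1 = 1` and (D1) holds, then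
for all `n ≥ 1`: `det (H_n(h̄)) = 0 ↔ j n = 0`; equivalently, `0` is an eigenvalue of
`H_n(h̄)` iff `j n = 0`. -/
theorem det_Hmat_eq_zero_iff {F : Type*} [Field F] [CharZero F] (h j : ℕ → F)
    (h0 : h 0 = 1) (j1 : j 1 = 1)
    (hD : ∀ n : ℕ, 1 ≤ n → n • h n = ∑ r ∈ Finset.Icc 1 n, j r * h (n - r)) :
    ∀ n : ℕ, 1 ≤ n →
      (((Hmat h n).det = 0 ↔ j n = 0) ∧
        (Module.End.HasEigenvalue (Matrix.toLin' (Hmat h n)) 0 ↔ j n = 0)) := by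
  intro n hn
  obtain ⟨m, rfl⟩ : ∃ m, n = m + 1 := ⟨n - 1, (Nat.succ_pred_eq_of_pos hn).symm⟩
  have key := det_Hmat_key h j h0 hD m
  have hne : ((-1 : F) ^ m) ≠ 0 := pow_ne_zero _ (by norm_num)
  have hdet : (Hmat h (m + 1)).det = 0 ↔ j (m + 1) = 0 := by
    rw [key, mul_eq_zero]
    exact ⟨fun hor => hor.resolve_left hne, Or.inr⟩
  refine ⟨hdet, ?_⟩
  rw [← hdet]
  constructor
  · intro hE
    obtain ⟨v, hv⟩ := hE.exists_hasEigenvector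
    rw [← Matrix.exists_mulVec_eq_zero_iff]
    refine ⟨v, hv.2, ?_⟩
    have := hv.apply_eq_smul
    rwa [Matrix.toLin'_apply, zero_smul] at this
  · intro hd
    obtain ⟨v, hv0, hv⟩ := Matrix.exists_mulVec_eq_zero_iff.mpr hd
    exact Module.End.hasEigenvalue_of_hasEigenvector
      ⟨Module.End.mem_eigenspace_iff.mpr (by rw [Matrix.toLin'_apply, hv, zero_smul]), hv0⟩
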